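/- Let ψ be a structural set and f a C² function from ℝ³ to ℝ_{0,3}. Then the sandwich operator ν(f) = Σᵢ ψⁱ f ψⁱ commutes with the two-sided Dirac operator: ψ∂[ν(f)]ψ∂ = ν(ψ∂ f ψ∂). -/

import Mathlib

noncomputable section

abbrev V3 : Type := Fin 3 → ℝ

/-- The negative-definite quadratic form on `ℝ³`, so that `CliffordAlgebra Q3 = ℝ_{0,3}`. -/
def Q3 : QuadraticForm ℝ V3 := -(QuadraticMap.weightedSumSquares ℝ (fun _ : Fin 3 => (1:ℝ)))

/-- The real Clifford algebra `ℝ_{0,3}`. -/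
abbrev Cl3 : Type := CliffordAlgebra Q3

namespace Cl3

def bCl : Module.Basis (Module.Free.ChooseBasisIndex ℝ Cl3) ℝ Cl3 := Module.Free.chooseBasis ℝ Cl3

def toLp : Cl3 →ₗ[ℝ] lp (fun _ : Module.Free.ChooseBasisIndex ℝ Cl3 => ℝ) ⊤ where
  toFun x := ⟨fun i => bCl.repr x i, by
    apply memℓp_infty
    have h1 : (Set.range ((bCl.repr x) : _ → ℝ)).Finite := by
      apply Set.Finite.subset (((bCl.repr x).frange : Finset ℝ).finite_toSet.insert 0)
      rintro y ⟨i, rfl⟩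
      by_cases h : (bCl.repr x) i = 0
      · simp [h]
      · exact Set.mem_insert_of_mem _ (by
          simp only [Finset.mem_coe, Finsupp.mem_frange]
          exact ⟨h, i, rfl⟩)
    have h2 : (Set.range fun i => ‖(bCl.repr x) i‖).Finite := by
      have := h1.image norm
      apply this.subset
      rintro y ⟨i, rfl⟩
      exact ⟨(bCl.repr x) i, ⟨i, rfl⟩, rfl⟩
    exact h2.bddAbove⟩
  map_add' x y := by ext i; simp <;> rfl
  map_smul' c x := by ext i; simp

lemma toLp_injective : Function.Injective toLp := by
  intro x y h
  apply bCl.repr.injective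
  ext i
  exact congrFun (congrArg Subtype.val h) i

instance : NormedAddCommGroup Cl3 := NormedAddCommGroup.induced Cl3 _ toLp toLp_injective
instance : NormedSpace ℝ Cl3 := NormedSpace.induced ℝ Cl3 _ toLp

end Cl3

/-- Embedding of vectors `ℝ³ ⊂ ℝ_{0,3}`. -/
def ι3 : V3 →ₗ[ℝ] Cl3 := CliffordAlgebra.ι Q3

/-- `ψ` is a structural set: `ψⁱψʲ + ψʲψⁱ = -2δᵢⱼ` inside `ℝ_{0,3}`. -/
def StructuralSet (ψ : Fin 3 → V3) : Prop :=
  ∀ i j, ι3 (ψ i) * ι3 (ψ j) + ι3 (ψ j) * ι3 (ψ i)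
      = algebraMap ℝ Cl3 (if i = j then -2 else 0)

/-- Partial derivative `∂f/∂xᵢ`. -/
def pd (i : Fin 3) (f : V3 → Cl3) : V3 → Cl3 := fun x => fderiv ℝ f x (Pi.single i 1)

/-- Left Dirac operator `ψ∂ f = Σᵢ ψⁱ ∂f/∂xᵢ`. -/
def DL (ψ : Fin 3 → V3) (f : V3 → Cl3) : V3 → Cl3 := fun x => ∑ i, ι3 (ψ i) * pd i f x

/-- Right Dirac operator `f ψ∂ = Σᵢ (∂f/∂xᵢ) ψⁱ`. -/
def DR (ψ : Fin 3 → V3) (f : V3 → Cl3) : V3 → Cl3 := fun x => ∑ i, pd i f x * ι3 (ψ i)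

/-- Two-sided operator `φ∂ f ψ∂ = Σᵢⱼ φⁱ (∂²f/∂xᵢ∂xⱼ) ψʲ`. -/
def DLR (φ ψ : Fin 3 → V3) (f : V3 → Cl3) : V3 → Cl3 :=
  fun x => ∑ i, ∑ j, ι3 (φ i) * pd i (pd j f) x * ι3 (ψ j)

/-- Componentwise Laplacian. -/
def lap (f : V3 → Cl3) : V3 → Cl3 := fun x => ∑ i, pd i (pd i f) x

/-- `ν(a) = Σᵢ ψⁱ a ψⁱ`. -/
def nu (ψ : Fin 3 → V3) (a : Cl3) : Cl3 := ∑ i, ι3 (ψ i) * a * ι3 (ψ i)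

/-- `ω(a) = Σᵢ φⁱ a ψⁱ`. -/
def om (φ ψ : Fin 3 → V3) (a : Cl3) : Cl3 := ∑ i, ι3 (φ i) * a * ι3 (ψ i)

/-- `x_ψ = Σᵢ ψⁱ xᵢ`. -/
def xPsi (ψ : Fin 3 → V3) (x : V3) : Cl3 := ∑ i, x i • ι3 (ψ i)


/-! ### Auxiliary: finite-dimensionality of `Cl3` -/

def E3 : Fin 3 → Cl3 := fun i => ι3 (Pi.single i 1)

lemma Q3_single (i : Fin 3) : Q3 (Pi.single i (1:ℝ)) = -1 := by
  simp [Q3, QuadraticMap.weightedSumSquares_apply, Pi.single_apply]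

lemma E3_sq (i : Fin 3) : E3 i * E3 i = -1 := by
  rw [E3, ι3, CliffordAlgebra.ι_sq_scalar, Q3_single]
  simp

lemma E3_anticomm {i j : Fin 3} (h : i ≠ j) : E3 i * E3 j = -(E3 j * E3 i) := by
  have hp : QuadraticMap.polar Q3 (Pi.single i (1:ℝ)) (Pi.single j 1) = 0 := by
    simp [QuadraticMap.polar, Q3, QuadraticMap.weightedSumSquares_apply, Pi.single_apply,
      Finset.sum_add_distrib, add_sq, Finset.mul_sum]
    ring_nf
    simp [ite_mul, mul_ite, sq, Finset.sum_add_distrib, Finset.sum_ite_eq', h.symm]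
    norm_num
  have := CliffordAlgebra.ι_mul_ι_add_swap (Q := Q3) (Pi.single i (1:ℝ)) (Pi.single j 1)
  rw [hp] at this
  simp only [map_zero] at this
  exact eq_neg_of_add_eq_zero_left this

def Gset : Set Cl3 :=
  {1, E3 0, E3 1, E3 2, E3 0 * E3 1, E3 0 * E3 2, E3 1 * E3 2, E3 0 * (E3 1 * E3 2)}

lemma sqE (i : Fin 3) (x : Cl3) : E3 i * (E3 i * x) = -x := by
  rw [← mul_assoc, E3_sq]; simp

lemma s10 : E3 1 * E3 0 = -(E3 0 * E3 1) := E3_anticomm (by decide)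
lemma s20 : E3 2 * E3 0 = -(E3 0 * E3 2) := E3_anticomm (by decide)
lemma s21 : E3 2 * E3 1 = -(E3 1 * E3 2) := E3_anticomm (by decide)
lemma s10' (x : Cl3) : E3 1 * (E3 0 * x) = -(E3 0 * (E3 1 * x)) := by
  rw [← mul_assoc, s10]; simp [mul_assoc]
lemma s20' (x : Cl3) : E3 2 * (E3 0 * x) = -(E3 0 * (E3 2 * x)) := by
  rw [← mul_assoc, s20]; simp [mul_assoc]
lemma s21' (x : Cl3) : E3 2 * (E3 1 * x) = -(E3 1 * (E3 2 * x)) := by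
  rw [← mul_assoc, s21]; simp [mul_assoc]

lemma g1 : (1:Cl3) ∈ Gset := Or.inl rfl
lemma g2 : E3 0 ∈ Gset := Or.inr (Or.inl rfl)
lemma g3 : E3 1 ∈ Gset := Or.inr (Or.inr (Or.inl rfl))
lemma g4 : E3 2 ∈ Gset := Or.inr (Or.inr (Or.inr (Or.inl rfl)))
lemma g5 : E3 0 * E3 1 ∈ Gset := Or.inr (Or.inr (Or.inr (Or.inr (Or.inl rfl))))
lemma g6 : E3 0 * E3 2 ∈ Gset := Or.inr (Or.inr (Or.inr (Or.inr (Or.inr (Or.inl rfl)))))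
lemma g7 : E3 1 * E3 2 ∈ Gset := Or.inr (Or.inr (Or.inr (Or.inr (Or.inr (Or.inr (Or.inl rfl))))))
lemma g8 : E3 0 * (E3 1 * E3 2) ∈ Gset :=
  Or.inr (Or.inr (Or.inr (Or.inr (Or.inr (Or.inr (Or.inr rfl))))))

lemma Emul_mem (i : Fin 3) (g : Cl3) (hg : g ∈ Gset) :
    E3 i * g ∈ Submodule.span ℝ Gset := by
  have S := fun {g : Cl3} (h : g ∈ Gset) => Submodule.subset_span (R := ℝ) h
  rcases hg with rfl|rfl|rfl|rfl|rfl|rfl|rfl|rfl <;> fin_cases i <;>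
    simp only [Fin.zero_eta, Fin.mk_one, Fin.reduceFinMk, mul_one, mul_assoc, s10', s20', s21',
      s10, s20, s21, sqE, E3_sq, neg_mul, mul_neg, mul_one, neg_neg] <;>
    first
      | exact S g1 | exact neg_mem (S g1)
      | exact S g2 | exact neg_mem (S g2)
      | exact S g3 | exact neg_mem (S g3)
      | exact S g4 | exact neg_mem (S g4)
      | exact S g5 | exact neg_mem (S g5)
      | exact S g6 | exact neg_mem (S g6)
      | exact S g7 | exact neg_mem (S g7)
      | exact S g8 | exact neg_mem (S g8)

lemma Emul_span (i : Fin 3) (x : Cl3) (hx : x ∈ Submodule.span ℝ Gset) :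
    E3 i * x ∈ Submodule.span ℝ Gset := by
  induction hx using Submodule.span_induction with
  | mem g hg => exact Emul_mem i g hg
  | zero => rw [mul_zero]; exact zero_mem _
  | add y z _ _ hy hz => rw [mul_add]; exact add_mem hy hz
  | smul c y _ hy => rw [mul_smul_comm]; exact Submodule.smul_mem _ _ hy

lemma mem_span_G (x : Cl3) : x ∈ Submodule.span ℝ Gset := by
  induction x using CliffordAlgebra.left_induction with
  | algebraMap r =>
    rw [Algebra.algebraMap_eq_smul_one]
    exact Submodule.smul_mem _ r (Submodule.subset_span g1)
  | add x y hx hy => exact add_mem hx hy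
  | ι_mul x m hx =>
    have hm : CliffordAlgebra.ι Q3 m = ∑ i, m i • E3 i := by
      have h1 : m = ∑ i, Pi.single i (m i) := (Finset.univ_sum_single m).symm
      calc CliffordAlgebra.ι Q3 m = CliffordAlgebra.ι Q3 (∑ i, Pi.single i (m i)) := by rw [← h1]
        _ = ∑ i, m i • E3 i := by
            rw [map_sum]
            refine Finset.sum_congr rfl fun i _ => ?_
            rw [E3, ι3, ← map_smul]
            congr 1
            ext j
            simp [Pi.single_apply]
    rw [hm, Finset.sum_mul]
    refine Submodule.sum_mem _ fun i _ => ?_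
    rw [smul_mul_assoc]
    exact Submodule.smul_mem _ _ (Emul_span i x hx)

lemma span_G : Submodule.span ℝ Gset = ⊤ := top_unique fun x _ => mem_span_G x

instance : Module.Finite ℝ Cl3 :=
  Module.finite_def.mpr (Submodule.fg_def.mpr ⟨Gset, by
    apply Set.Finite.insert; apply Set.Finite.insert; apply Set.Finite.insert
    apply Set.Finite.insert; apply Set.Finite.insert; apply Set.Finite.insert
    apply Set.Finite.insert; exact Set.finite_singleton _, span_G⟩)

instance : FiniteDimensional ℝ Cl3 := inferInstance

/-! ### Auxiliary: analytic lemmas -/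

def nuL (ψ : Fin 3 → V3) : Cl3 →ₗ[ℝ] Cl3 where
  toFun a := nu ψ a
  map_add' a b := by simp [nu, mul_add, add_mul, Finset.sum_add_distrib]
  map_smul' c a := by simp [nu, Finset.smul_sum, mul_smul_comm, smul_mul_assoc]

def nuCLM (ψ : Fin 3 → V3) : Cl3 →L[ℝ] Cl3 := (nuL ψ).toContinuousLinearMap

lemma nuCLM_apply (ψ : Fin 3 → V3) (a : Cl3) : nuCLM ψ a = nu ψ a := rfl

lemma pd_clm (L : Cl3 →L[ℝ] Cl3) (g : V3 → Cl3) (x : V3)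
    (hg : DifferentiableAt ℝ g x) (i : Fin 3) :
    pd i (fun y => L (g y)) x = L (pd i g x) := by
  unfold pd
  have h : (fun y => L (g y)) = (L : Cl3 → Cl3) ∘ g := rfl
  rw [h, fderiv_comp x L.differentiableAt hg, L.fderiv]
  rfl

lemma pd_pd_symm (f : V3 → Cl3) (hf : ContDiff ℝ 2 f) (x : V3) (i j : Fin 3) :
    pd i (pd j f) x = pd j (pd i f) x := by
  have hfd : ContDiff ℝ 1 (fderiv ℝ f) := hf.fderiv_right (by norm_num)
  have hd : DifferentiableAt ℝ (fderiv ℝ f) x := (hfd.differentiable (by norm_num)) x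
  have key : ∀ v w : V3,
      fderiv ℝ (fun y => fderiv ℝ f y v) x w = fderiv ℝ (fderiv ℝ f) x w v := by
    intro v w
    rw [fderiv_clm_apply hd (differentiableAt_const v)]
    simp
  have hsymm : IsSymmSndFDerivAt ℝ f x := hf.contDiffAt.isSymmSndFDerivAt (by norm_num)
  show fderiv ℝ (fun y => fderiv ℝ f y (Pi.single j 1)) x (Pi.single i 1)
      = fderiv ℝ (fun y => fderiv ℝ f y (Pi.single i 1)) x (Pi.single j 1)
  rw [key, key]
  exact hsymm.eq _ _

/-! ### Auxiliary: the algebraic identity -/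

lemma alg (ψ : Fin 3 → V3) (hψ : StructuralSet ψ) (a : Fin 3 → Fin 3 → Cl3)
    (hsym : ∀ i j, a i j = a j i) :
    ∑ i, ∑ j, ι3 (ψ i) * nu ψ (a i j) * ι3 (ψ j)
      = nu ψ (∑ i, ∑ j, ι3 (ψ i) * a i j * ι3 (ψ j)) := by
  have hrel2 : ∀ i j, ι3 (ψ i) * ι3 (ψ j) + ι3 (ψ j) * ι3 (ψ i)
      = (if i = j then (-2:ℝ) else 0) • (1:Cl3) := by
    intro i j
    have h := hψ i j
    rw [Algebra.algebraMap_eq_smul_one] at h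
    exact h
  have hrel : ∀ i j, ι3 (ψ i) * ι3 (ψ j)
      = (if i = j then (-2:ℝ) else 0) • (1:Cl3) - ι3 (ψ j) * ι3 (ψ i) :=
    fun i j => eq_sub_of_add_eq (hrel2 i j)
  have hT : (∑ i, ∑ j, a i j * (ι3 (ψ j) * ι3 (ψ i))) = -(∑ i, a i i) := by
    have hTT : (∑ i, ∑ j, a i j * (ι3 (ψ j) * ι3 (ψ i)))
        + (∑ i, ∑ j, a i j * (ι3 (ψ j) * ι3 (ψ i))) = (-2:ℝ) • (∑ i, a i i) := by
      nth_rewrite 2 [Finset.sum_comm]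
      rw [← Finset.sum_add_distrib]
      calc (∑ i, ((∑ j, a i j * (ι3 (ψ j) * ι3 (ψ i)))
              + ∑ j, a j i * (ι3 (ψ i) * ι3 (ψ j))))
          = ∑ i, ∑ j, (a i j * (ι3 (ψ j) * ι3 (ψ i)) + a i j * (ι3 (ψ i) * ι3 (ψ j))) := by
            refine Finset.sum_congr rfl fun i _ => ?_
            rw [← Finset.sum_add_distrib]
            refine Finset.sum_congr rfl fun j _ => ?_
            rw [hsym j i]
        _ = ∑ i, ∑ j, (if j = i then (-2:ℝ) else 0) • a i j := by
            refine Finset.sum_congr rfl fun i _ => Finset.sum_congr rfl fun j _ => ?_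
            rw [← mul_add, hrel2 j i, mul_smul_comm, mul_one]
        _ = (-2:ℝ) • (∑ i, a i i) := by
            rw [Finset.smul_sum]
            refine Finset.sum_congr rfl fun i _ => ?_
            simp [ite_smul, Finset.sum_ite_eq']
    have h2 : (2:ℝ) • (∑ i, ∑ j, a i j * (ι3 (ψ j) * ι3 (ψ i)))
        = (2:ℝ) • (-(∑ i, a i i)) := by
      rw [two_smul, hTT]
      module
    exact smul_right_injective Cl3 two_ne_zero h2
  have hU : (∑ i, ∑ j, (ι3 (ψ j) * ι3 (ψ i)) * a i j) = -(∑ i, a i i) := by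
    have hTT : (∑ i, ∑ j, (ι3 (ψ j) * ι3 (ψ i)) * a i j)
        + (∑ i, ∑ j, (ι3 (ψ j) * ι3 (ψ i)) * a i j) = (-2:ℝ) • (∑ i, a i i) := by
      nth_rewrite 2 [Finset.sum_comm]
      rw [← Finset.sum_add_distrib]
      calc (∑ i, ((∑ j, (ι3 (ψ j) * ι3 (ψ i)) * a i j)
              + ∑ j, (ι3 (ψ i) * ι3 (ψ j)) * a j i))
          = ∑ i, ∑ j, ((ι3 (ψ j) * ι3 (ψ i)) * a i j + (ι3 (ψ i) * ι3 (ψ j)) * a i j) := by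
            refine Finset.sum_congr rfl fun i _ => ?_
            rw [← Finset.sum_add_distrib]
            refine Finset.sum_congr rfl fun j _ => ?_
            rw [hsym j i]
        _ = ∑ i, ∑ j, (if j = i then (-2:ℝ) else 0) • a i j := by
            refine Finset.sum_congr rfl fun i _ => Finset.sum_congr rfl fun j _ => ?_
            rw [← add_mul, add_comm (ι3 (ψ j) * ι3 (ψ i)), hrel2 i j, smul_mul_assoc, one_mul]
            congr 1
            simp [eq_comm]
        _ = (-2:ℝ) • (∑ i, a i i) := by
            rw [Finset.smul_sum]
            refine Finset.sum_congr rfl fun i _ => ?_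
            simp [ite_smul, Finset.sum_ite_eq']
    have h2 : (2:ℝ) • (∑ i, ∑ j, (ι3 (ψ j) * ι3 (ψ i)) * a i j)
        = (2:ℝ) • (-(∑ i, a i i)) := by
      rw [two_smul, hTT]
      module
    exact smul_right_injective Cl3 two_ne_zero h2
  have step1 : ∑ i, ∑ j, ι3 (ψ i) * nu ψ (a i j) * ι3 (ψ j)
      = ∑ i, ∑ j, ∑ k, ι3 (ψ i) * (ι3 (ψ k) * (a i j * (ι3 (ψ k) * ι3 (ψ j)))) := by
    simp only [nu, Finset.mul_sum, Finset.sum_mul, mul_assoc]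
  have expand : ∀ i j k : Fin 3, ι3 (ψ i) * (ι3 (ψ k) * (a i j * (ι3 (ψ k) * ι3 (ψ j))))
      = ((if i = k then (-2:ℝ) else 0) * (if k = j then (-2:ℝ) else 0)) • a i j
        + ι3 (ψ k) * (ι3 (ψ i) * (a i j * (ι3 (ψ j) * ι3 (ψ k))))
        - ((if i = k then (-2:ℝ) else 0) • (a i j * (ι3 (ψ j) * ι3 (ψ k)))
           + (if k = j then (-2:ℝ) else 0) • (ι3 (ψ k) * (ι3 (ψ i) * a i j))) := by
    intro i j k
    have h1 : ι3 (ψ i) * (ι3 (ψ k) * (a i j * (ι3 (ψ k) * ι3 (ψ j))))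
        = (ι3 (ψ i) * ι3 (ψ k)) * a i j * (ι3 (ψ k) * ι3 (ψ j)) := by
      noncomm_ring
    rw [h1, hrel i k, hrel k j]
    simp only [sub_mul, mul_sub, smul_mul_assoc, mul_smul_comm, one_mul, mul_one, smul_smul,
      mul_assoc]
    module
  have p1 : (∑ i, ∑ j, ∑ k : Fin 3,
      ((if i = k then (-2:ℝ) else 0) * (if k = j then (-2:ℝ) else 0)) • a i j)
      = (4:ℝ) • (∑ i, a i i) := by
    simp [Finset.sum_ite_eq, Finset.sum_ite_eq', ite_mul, mul_ite, ite_smul, Finset.smul_sum]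
    norm_num
  have p2 : (∑ i, ∑ j, ∑ k : Fin 3,
      (if i = k then (-2:ℝ) else 0) • (a i j * (ι3 (ψ j) * ι3 (ψ k))))
      = (2:ℝ) • (∑ i, a i i) := by
    have h : (∑ i, ∑ j, ∑ k : Fin 3,
        (if i = k then (-2:ℝ) else 0) • (a i j * (ι3 (ψ j) * ι3 (ψ k))))
        = (-2:ℝ) • ∑ i, ∑ j, a i j * (ι3 (ψ j) * ι3 (ψ i)) := by
      simp [Finset.sum_ite_eq, ite_smul, Finset.smul_sum]
    rw [h, hT]
    module
  have p3 : (∑ i, ∑ j, ∑ k : Fin 3,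
      (if k = j then (-2:ℝ) else 0) • (ι3 (ψ k) * (ι3 (ψ i) * a i j)))
      = (2:ℝ) • (∑ i, a i i) := by
    have h : (∑ i, ∑ j, ∑ k : Fin 3,
        (if k = j then (-2:ℝ) else 0) • (ι3 (ψ k) * (ι3 (ψ i) * a i j)))
        = (-2:ℝ) • ∑ i, ∑ j, (ι3 (ψ j) * ι3 (ψ i)) * a i j := by
      simp [Finset.sum_ite_eq', ite_smul, Finset.smul_sum, mul_assoc]
    rw [h, hU]
    module
  have p4 : (∑ i, ∑ j, ∑ k : Fin 3, ι3 (ψ k) * (ι3 (ψ i) * (a i j * (ι3 (ψ j) * ι3 (ψ k)))))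
      = nu ψ (∑ i, ∑ j, ι3 (ψ i) * a i j * ι3 (ψ j)) := by
    calc (∑ i, ∑ j, ∑ k : Fin 3, ι3 (ψ k) * (ι3 (ψ i) * (a i j * (ι3 (ψ j) * ι3 (ψ k)))))
        = ∑ i, ∑ k, ∑ j : Fin 3, ι3 (ψ k) * (ι3 (ψ i) * (a i j * (ι3 (ψ j) * ι3 (ψ k)))) :=
          Finset.sum_congr rfl fun i _ => Finset.sum_comm
      _ = ∑ k, ∑ i, ∑ j : Fin 3, ι3 (ψ k) * (ι3 (ψ i) * (a i j * (ι3 (ψ j) * ι3 (ψ k)))) :=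
          Finset.sum_comm
      _ = nu ψ (∑ i, ∑ j, ι3 (ψ i) * a i j * ι3 (ψ j)) := by
          simp only [nu, Finset.mul_sum, Finset.sum_mul, mul_assoc]
  calc ∑ i, ∑ j, ι3 (ψ i) * nu ψ (a i j) * ι3 (ψ j)
      = ∑ i, ∑ j, ∑ k, ι3 (ψ i) * (ι3 (ψ k) * (a i j * (ι3 (ψ k) * ι3 (ψ j)))) := step1
    _ = (∑ i, ∑ j, ∑ k : Fin 3,
          ((if i = k then (-2:ℝ) else 0) * (if k = j then (-2:ℝ) else 0)) • a i j)
        + (∑ i, ∑ j, ∑ k : Fin 3, ι3 (ψ k) * (ι3 (ψ i) * (a i j * (ι3 (ψ j) * ι3 (ψ k)))))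
        - ((∑ i, ∑ j, ∑ k : Fin 3,
              (if i = k then (-2:ℝ) else 0) • (a i j * (ι3 (ψ j) * ι3 (ψ k))))
           + (∑ i, ∑ j, ∑ k : Fin 3,
              (if k = j then (-2:ℝ) else 0) • (ι3 (ψ k) * (ι3 (ψ i) * a i j)))) := by
        simp only [expand, Finset.sum_add_distrib, Finset.sum_sub_distrib]
    _ = nu ψ (∑ i, ∑ j, ι3 (ψ i) * a i j * ι3 (ψ j)) := by
        rw [p1, p2, p3, p4]
        module

/-- the sandwich `ν` commutes with the two-sided Dirac operator:
`ψ∂[ν(f)]ψ∂ = ν(ψ∂ f ψ∂)`. -/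
theorem stmt4 (ψ : Fin 3 → V3) (hψ : StructuralSet ψ)
    (f : V3 → Cl3) (hf : ContDiff ℝ 2 f) :
    ∀ x, DLR ψ ψ (fun y => nu ψ (f y)) x = nu ψ (DLR ψ ψ f x) := by
  intro x
  have hd1 : Differentiable ℝ f := hf.differentiable (by norm_num)
  have hfd : ContDiff ℝ 1 (fderiv ℝ f) := hf.fderiv_right (by norm_num)
  have hpd : ∀ j, Differentiable ℝ (pd j f) := fun j y =>
    ((hfd.differentiable (by norm_num)) y).clm_apply (differentiableAt_const _)
  have h1 : ∀ j, pd j (fun z => nu ψ (f z)) = fun y => nuCLM ψ (pd j f y) := by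
    intro j
    funext y
    exact pd_clm (nuCLM ψ) f y (hd1 y) j
  have h2 : ∀ i j, pd i (pd j (fun z => nu ψ (f z))) x = nu ψ (pd i (pd j f) x) := by
    intro i j
    rw [h1 j]
    exact pd_clm (nuCLM ψ) (pd j f) x (hpd j x) i
  unfold DLR
  simp only [h2]
  exact alg ψ hψ (fun i j => pd i (pd j f) x) (fun i j => pd_pd_symm f hf x i j)
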